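/- The KL divergence between the best-of-n policy and the base policy is at most log n − (n−1)/n: if π is a probability distribution on a finite set and π^{(n)} denotes the distribution of the highest-reward sample among n i.i.d. draws from π (with respect to an injective reward function, so ties have probability zero at each fixed point via strict ordering), then D_KL(π^{(n)} ‖ π) ≤ log n − (n−1)/n. -/

import Mathlib

lemma bon_telescope {A : Type*} [Fintype A] (π : A → ℝ) (r : A → ℝ)
    (hr : Function.Injective r) (H : ℝ → ℝ) :
    ∑ a, (H (∑ a' ∈ Finset.univ.filter (fun a' => r a' ≤ r a), π a')
      - H (∑ a' ∈ Finset.univ.filter (fun a' => r a' < r a), π a'))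
      = H (∑ a, π a) - H 0 := by
  classical
  suffices h : ∀ s : Finset A,
      ∑ a ∈ s, (H (∑ a' ∈ s.filter (fun a' => r a' ≤ r a), π a')
        - H (∑ a' ∈ s.filter (fun a' => r a' < r a), π a'))
        = H (∑ a ∈ s, π a) - H 0 from h Finset.univ
  intro s
  induction s using Finset.induction_on_max_value r with
  | empty => simp
  | insert a s ha hmax ih =>
    have hlt : ∀ x ∈ s, r x < r a := by
      intro x hx
      rcases (hmax x hx).lt_or_eq with h | h
      · exact h
      · exact absurd (hr h) (by rintro rfl; exact ha hx)
    have h1 : (insert a s).filter (fun a' => r a' ≤ r a) = insert a s := by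
      apply Finset.filter_true_of_mem
      intro x hx
      rcases Finset.mem_insert.1 hx with rfl | hx
      · exact le_refl _
      · exact (hlt x hx).le
    have h2 : (insert a s).filter (fun a' => r a' < r a) = s := by
      ext x
      simp only [Finset.mem_filter, Finset.mem_insert]
      constructor
      · rintro ⟨rfl | hx, h⟩
        · exact absurd h (lt_irrefl _)
        · exact hx
      · intro hx; exact ⟨Or.inr hx, hlt x hx⟩
    have h3 : ∀ x ∈ s, (insert a s).filter (fun a' => r a' ≤ r x)
        = s.filter (fun a' => r a' ≤ r x) := by
      intro x hx
      rw [Finset.filter_insert, if_neg (not_le.2 (hlt x hx))]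
    have h4 : ∀ x ∈ s, (insert a s).filter (fun a' => r a' < r x)
        = s.filter (fun a' => r a' < r x) := by
      intro x hx
      rw [Finset.filter_insert, if_neg (not_lt.2 (hlt x hx).le)]
    have hs : ∑ x ∈ s, (H (∑ a' ∈ (insert a s).filter (fun a' => r a' ≤ r x), π a')
        - H (∑ a' ∈ (insert a s).filter (fun a' => r a' < r x), π a'))
        = ∑ x ∈ s, (H (∑ a' ∈ s.filter (fun a' => r a' ≤ r x), π a')
        - H (∑ a' ∈ s.filter (fun a' => r a' < r x), π a')) :=
      Finset.sum_congr rfl fun x hx => by rw [h3 x hx, h4 x hx]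
    rw [Finset.sum_insert ha, h1, h2, hs, ih, Finset.sum_insert ha]
    ring

open Finset

lemma bon_log_ge (n : ℕ) (hn : 1 ≤ n) : ((n : ℝ) - 1) / n ≤ Real.log n := by
  have hn0 : (0:ℝ) < n := by exact_mod_cast hn
  have h := Real.log_le_sub_one_of_pos (show (0:ℝ) < (n:ℝ)⁻¹ by positivity)
  rw [Real.log_inv] at h
  rw [div_le_iff₀ hn0]
  have h2 : (1:ℝ) - (n:ℝ)⁻¹ ≤ Real.log n := by linarith
  have h3 : ((1:ℝ) - (n:ℝ)⁻¹) * n = (n:ℝ) - 1 := by field_simp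
  nlinarith [mul_le_mul_of_nonneg_right h2 hn0.le]

lemma bon_key (n : ℕ) (hn : 1 ≤ n) {G F : ℝ} (hG : 0 ≤ G) (hGF : G < F) :
    (F ^ n - G ^ n) * Real.log ((F ^ n - G ^ n) / (F - G)) ≤
      (F ^ n - G ^ n) * Real.log n - ((n : ℝ) - 1) / n * (F ^ n - G ^ n)
        + ((n : ℝ) - 1) * (F ^ n * Real.log F - G ^ n * Real.log G) := by
  have hn0 : (0:ℝ) < n := by exact_mod_cast hn
  have hnn : n - 1 + 1 = n := Nat.succ_pred_eq_of_pos hn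
  have hcast : ((n - 1 : ℕ) : ℝ) = (n : ℝ) - 1 := by
    rw [Nat.cast_sub hn]; norm_num
  rcases hG.eq_or_lt with h0 | h0
  · -- G = 0
    subst h0
    have hF0 : 0 < F := hGF
    rw [zero_pow (by omega : n ≠ 0)]
    have hpow : F ^ n = F ^ (n - 1) * F := by rw [← pow_succ, hnn]
    have hdiv : (F ^ n - 0) / (F - 0) = F ^ (n - 1) := by
      rw [sub_zero, sub_zero, hpow, mul_div_cancel_right₀ _ hF0.ne']
    rw [hdiv, Real.log_pow, hcast]
    have hFn : 0 < F ^ n := pow_pos hF0 n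
    have hlog := bon_log_ge n hn
    nlinarith [mul_le_mul_of_nonneg_left hlog hFn.le]
  · -- 0 < G
    set q : ℝ → ℝ := fun x => ∑ k ∈ range n, x ^ k * G ^ (n - 1 - k) with hq
    have hPD : ∀ x : ℝ, q x * (x - G) = x ^ n - G ^ n := fun x => geom_sum₂_mul x G n
    have hqpos : ∀ x : ℝ, G ≤ x → 0 < q x := by
      intro x hx
      have hx0 : 0 < x := lt_of_lt_of_le h0 hx
      apply Finset.sum_pos' (fun k _ => by positivity)
      refine ⟨0, Finset.mem_range.2 (by omega), ?_⟩
      simp only [pow_zero, one_mul]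
      positivity
    set q' : ℝ → ℝ := fun x => ∑ k ∈ range n, ((k : ℝ) * x ^ (k - 1)) * G ^ (n - 1 - k) with hq'
    have hqd : ∀ x : ℝ, HasDerivAt q (q' x) x := by
      intro x
      apply HasDerivAt.fun_sum
      intro k _
      exact (hasDerivAt_pow k x).mul_const _
    have hkey : ∀ x : ℝ, q' x * (x - G) + q x = (n : ℝ) * x ^ (n - 1) := by
      intro x
      have h1 : HasDerivAt (fun y => q y * (y - G)) (q' x * (x - G) + q x * 1) x :=
        (hqd x).mul ((hasDerivAt_id x).sub_const G)
      have h2 : HasDerivAt (fun y : ℝ => y ^ n - G ^ n) ((n : ℝ) * x ^ (n - 1)) x :=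
        (hasDerivAt_pow n x).sub_const _
      have he : (fun y => q y * (y - G)) = fun y : ℝ => y ^ n - G ^ n := funext hPD
      rw [he] at h1
      simpa using h1.unique h2
    set h : ℝ → ℝ := fun x => (x ^ n - G ^ n) * (Real.log (q x) - Real.log n + ((n:ℝ) - 1)/n)
      - ((n:ℝ) - 1) * (x ^ n * Real.log x - G ^ n * Real.log G) with hh
    have hderiv : ∀ x : ℝ, G ≤ x → HasDerivAt h
        ((n : ℝ) * x ^ (n-1) * (Real.log (q x) - Real.log n + ((n:ℝ) - 1)/n)
          + (x ^ n - G ^ n) * (q' x / q x)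
          - ((n:ℝ) - 1) * ((n : ℝ) * x ^ (n-1) * Real.log x + x ^ n * x⁻¹)) x := by
      intro x hx
      have hx0 : 0 < x := lt_of_lt_of_le h0 hx
      have hqx : q x ≠ 0 := (hqpos x hx).ne'
      have d1 : HasDerivAt (fun y : ℝ => y ^ n - G ^ n) ((n : ℝ) * x ^ (n - 1)) x :=
        (hasDerivAt_pow n x).sub_const _
      have d2 : HasDerivAt (fun y => Real.log (q y) - Real.log n + ((n:ℝ) - 1)/n)
          (q' x / q x) x := (((hqd x).log hqx).sub_const _).add_const _
      have d3 : HasDerivAt (fun y : ℝ => y ^ n * Real.log y)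
          ((n : ℝ) * x ^ (n-1) * Real.log x + x ^ n * x⁻¹) x :=
        (hasDerivAt_pow n x).mul (Real.hasDerivAt_log hx0.ne')
      exact (d1.mul d2).sub ((d3.sub_const (G ^ n * Real.log G)).const_mul _)
    have hdnp : ∀ x : ℝ, G < x →
        ((n : ℝ) * x ^ (n-1) * (Real.log (q x) - Real.log n + ((n:ℝ) - 1)/n)
          + (x ^ n - G ^ n) * (q' x / q x)
          - ((n:ℝ) - 1) * ((n : ℝ) * x ^ (n-1) * Real.log x + x ^ n * x⁻¹)) ≤ 0 := by
      intro x hx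
      have hx0 : 0 < x := h0.trans hx
      have hqx : 0 < q x := hqpos x hx.le
      have hc : (0:ℝ) < (n : ℝ) * x ^ (n-1) := by positivity
      have e0 : q x * (x - G) * (q' x / q x) = (x - G) * q' x := by
        field_simp
      have e1 : (x ^ n - G ^ n) * (q' x / q x) = (n : ℝ) * x ^ (n-1) - q x := by
        rw [← hPD x, e0]
        linarith [hkey x]
      have e2 : x ^ n * x⁻¹ = x ^ (n-1) := by
        have hpow : x ^ n = x ^ (n - 1) * x := by rw [← pow_succ, hnn]
        rw [hpow, mul_assoc, mul_inv_cancel₀ hx0.ne', mul_one]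
      have e3 : Real.log (q x) - Real.log n - ((n:ℝ)-1) * Real.log x
          = Real.log (q x / ((n : ℝ) * x ^ (n-1))) := by
        rw [Real.log_div hqx.ne' hc.ne', Real.log_mul (by positivity) (by positivity),
          Real.log_pow, hcast]
        ring
      have e4 : ((n:ℝ)-1)/n * ((n:ℝ) * x^(n-1)) = ((n:ℝ)-1) * x^(n-1) := by
        field_simp
      have hlt := Real.log_le_sub_one_of_pos (div_pos hqx hc)
      have key2 : ((n : ℝ) * x ^ (n-1)) *
          (Real.log (q x) - Real.log n - ((n:ℝ)-1) * Real.log x) ≤ q x - (n : ℝ) * x ^ (n-1) := by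
        rw [e3]
        have := mul_le_mul_of_nonneg_left hlt hc.le
        calc ((n : ℝ) * x ^ (n-1)) * Real.log (q x / ((n : ℝ) * x ^ (n-1)))
            ≤ ((n : ℝ) * x ^ (n-1)) * (q x / ((n : ℝ) * x ^ (n-1)) - 1) := this
          _ = q x - (n : ℝ) * x ^ (n-1) := by field_simp
      rw [e1, e2]
      nlinarith [key2, e4]
    have hanti : AntitoneOn h (Set.Icc G F) := by
      apply antitoneOn_of_deriv_nonpos (convex_Icc G F)
      · exact fun x hx => ((hderiv x hx.1).continuousAt).continuousWithinAt
      · rw [interior_Icc]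
        exact fun x hx => ((hderiv x hx.1.le).differentiableAt).differentiableWithinAt
      · intro x hx
        rw [interior_Icc] at hx
        rw [(hderiv x hx.1.le).deriv]
        exact hdnp x hx.1
    have hF0 : h F ≤ h G :=
      hanti (Set.left_mem_Icc.2 hGF.le) (Set.right_mem_Icc.2 hGF.le) hGF.le
    have hhG : h G = 0 := by simp [hh, sub_self]
    rw [hhG] at hF0
    simp only [hh] at hF0
    have hD : (F ^ n - G ^ n) / (F - G) = q F := by
      rw [← hPD F, mul_div_cancel_right₀ _ (sub_ne_zero.2 hGF.ne')]
    rw [hD]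
    nlinarith [hF0]

theorem best_of_n_kl_bound {A : Type*} [Fintype A] [Nonempty A]
    (π : A → ℝ) (hπ : ∀ a, 0 ≤ π a) (hsum : ∑ a, π a = 1)
    (r : A → ℝ) (hr : Function.Injective r) (n : ℕ) (hn : 1 ≤ n)
    (πn : A → ℝ)
    (hπn : ∀ a, πn a =
      (∑ a' ∈ Finset.univ.filter (fun a' => r a' ≤ r a), π a') ^ n -
      (∑ a' ∈ Finset.univ.filter (fun a' => r a' < r a), π a') ^ n) :
    ∑ a, πn a * Real.log (πn a / π a) ≤ Real.log n - (n - 1) / n := by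
  classical
  set Fc : A → ℝ := fun a => ∑ a' ∈ Finset.univ.filter (fun a' => r a' ≤ r a), π a' with hFc
  set Gc : A → ℝ := fun a => ∑ a' ∈ Finset.univ.filter (fun a' => r a' < r a), π a' with hGc
  have hFG : ∀ a, Fc a = π a + Gc a := by
    intro a
    have hins : Finset.univ.filter (fun a' => r a' ≤ r a)
        = insert a (Finset.univ.filter (fun a' => r a' < r a)) := by
      ext x
      simp only [Finset.mem_filter, Finset.mem_insert, Finset.mem_univ, true_and]
      constructor
      · intro hx
        rcases hx.lt_or_eq with h | h
        · exact Or.inr h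
        · exact Or.inl (hr h)
      · rintro (rfl | hx)
        · exact le_refl _
        · exact hx.le
    have hna : a ∉ Finset.univ.filter (fun a' => r a' < r a) := by
      simp [lt_irrefl]
    rw [hFc, hGc]
    simp only
    rw [hins, Finset.sum_insert hna]
  have hG0 : ∀ a, 0 ≤ Gc a := fun a => Finset.sum_nonneg fun i _ => hπ i
  have hπna : ∀ a, πn a = (Fc a) ^ n - (Gc a) ^ n := hπn
  have hsum1 : ∑ a, πn a = 1 := by
    rw [Finset.sum_congr rfl fun a _ => hπna a]
    have t := bon_telescope π r hr (fun x => x ^ n)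
    simp only at t
    rw [t, hsum, one_pow, zero_pow (by omega : n ≠ 0), sub_zero]
  have hsum2 : ∑ a, ((Fc a) ^ n * Real.log (Fc a) - (Gc a) ^ n * Real.log (Gc a)) = 0 := by
    have t := bon_telescope π r hr (fun x => x ^ n * Real.log x)
    simp only at t
    rw [t, hsum, one_pow, Real.log_one, zero_pow (by omega : n ≠ 0)]
    ring
  have hpp : ∀ a ∈ Finset.univ, πn a * Real.log (πn a / π a) ≤
      πn a * Real.log n - ((n : ℝ) - 1) / n * πn a
        + ((n : ℝ) - 1) * ((Fc a) ^ n * Real.log (Fc a) - (Gc a) ^ n * Real.log (Gc a)) := by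
    intro a _
    rcases (hπ a).eq_or_lt with h0 | h0
    · have hFGa : Fc a = Gc a := by rw [hFG a, ← h0, zero_add]
      have hz : πn a = 0 := by rw [hπna a, hFGa, sub_self]
      rw [hz, hFGa]
      simp
    · have hGF : Gc a < Fc a := by rw [hFG a]; linarith
      have hk := bon_key n hn (hG0 a) hGF
      have hπa : π a = Fc a - Gc a := by rw [hFG a]; ring
      rw [hπna a, hπa]
      exact hk
  calc ∑ a, πn a * Real.log (πn a / π a)
      ≤ ∑ a, (πn a * Real.log n - ((n : ℝ) - 1) / n * πn a
        + ((n : ℝ) - 1) * ((Fc a) ^ n * Real.log (Fc a) - (Gc a) ^ n * Real.log (Gc a))) :=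
        Finset.sum_le_sum hpp
    _ = (∑ a, πn a) * Real.log n - ((n : ℝ) - 1) / n * (∑ a, πn a)
        + ((n : ℝ) - 1) * ∑ a, ((Fc a) ^ n * Real.log (Fc a) - (Gc a) ^ n * Real.log (Gc a)) := by
        rw [Finset.sum_add_distrib, Finset.sum_sub_distrib, ← Finset.sum_mul, ← Finset.mul_sum,
          ← Finset.mul_sum]
    _ = Real.log n - ((n : ℝ) - 1) / n := by
        rw [hsum1, hsum2]
        ring
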